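/- arXiv:1911.12508 — 4 statements merged into one kernel-verified Lean document; each statement's English description precedes it below -/
import Mathlib

section
/- Let A be an n×n Hermitian matrix with eigenvalues λ_1(A),…,λ_n(A) and corresponding orthonormal eigenvectors v_1,…,v_n, where v_{i,j} denotes the j-th component of v_i. Let M_j be the (n−1)×(n−1) principal submatrix of A obtained by deleting the j-th row and j-th column, with eigenvalues λ_1(M_j),…,λ_{n−1}(M_j). Then for all i, j: |v_{i,j}|² · ∏_{k=1, k≠i}^n (λ_i(A) − λ_k(A)) = ∏_{k=1}^{n−1} (λ_i(A) − λ_k(M_j)). -/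
open Matrix

section Aux

variable {m : Type*} [Fintype m] [DecidableEq m]

private lemma adjugate_unitary_conj (U : Matrix.unitaryGroup m ℂ) (B : Matrix m m ℂ) :
    adjugate ((U : Matrix m m ℂ) * B * star (U : Matrix m m ℂ)) =
      (U : Matrix m m ℂ) * adjugate B * star (U : Matrix m m ℂ) := by
  have hU : (U : Matrix m m ℂ) * star (U : Matrix m m ℂ) = 1 :=
    Matrix.mem_unitaryGroup_iff.mp U.2
  have hU' : star (U : Matrix m m ℂ) * (U : Matrix m m ℂ) = 1 :=
    Matrix.mem_unitaryGroup_iff'.mp U.2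
  have hdet : det (star (U : Matrix m m ℂ)) * det (U : Matrix m m ℂ) = 1 := by
    rw [← det_mul, hU', det_one]
  have hadjU : adjugate (U : Matrix m m ℂ) =
      det (U : Matrix m m ℂ) • star (U : Matrix m m ℂ) := by
    calc adjugate (U : Matrix m m ℂ)
        = (star (U : Matrix m m ℂ) * (U : Matrix m m ℂ)) * adjugate (U : Matrix m m ℂ) := by
          rw [hU', one_mul]
      _ = star (U : Matrix m m ℂ) * (det (U : Matrix m m ℂ) • 1) := by
          rw [mul_assoc, mul_adjugate]
      _ = det (U : Matrix m m ℂ) • star (U : Matrix m m ℂ) := by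
          rw [Matrix.mul_smul, mul_one]
  have hadjU' : adjugate (star (U : Matrix m m ℂ)) =
      det (star (U : Matrix m m ℂ)) • (U : Matrix m m ℂ) := by
    calc adjugate (star (U : Matrix m m ℂ))
        = ((U : Matrix m m ℂ) * star (U : Matrix m m ℂ)) * adjugate (star (U : Matrix m m ℂ)) := by
          rw [hU, one_mul]
      _ = (U : Matrix m m ℂ) * (det (star (U : Matrix m m ℂ)) • 1) := by
          rw [mul_assoc, mul_adjugate]
      _ = det (star (U : Matrix m m ℂ)) • (U : Matrix m m ℂ) := by
          rw [Matrix.mul_smul, mul_one]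
  rw [adjugate_mul_distrib, adjugate_mul_distrib, hadjU, hadjU',
    Matrix.smul_mul, Matrix.mul_smul, Matrix.mul_smul, smul_smul, hdet, one_smul, mul_assoc]

private lemma smul_one_sub_hermitian (z : ℂ) {B : Matrix m m ℂ} (hB : B.IsHermitian) :
    z • (1 : Matrix m m ℂ) - B =
      (hB.eigenvectorUnitary : Matrix m m ℂ) *
        (diagonal fun k => z - (hB.eigenvalues k : ℂ)) *
        star (hB.eigenvectorUnitary : Matrix m m ℂ) := by
  have hU : (hB.eigenvectorUnitary : Matrix m m ℂ) * star (hB.eigenvectorUnitary : Matrix m m ℂ)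
      = 1 := Matrix.mem_unitaryGroup_iff.mp hB.eigenvectorUnitary.2
  have hdiag : (diagonal fun k => z - (hB.eigenvalues k : ℂ)) =
      z • (1 : Matrix m m ℂ) - diagonal (RCLike.ofReal ∘ hB.eigenvalues) := by
    rw [smul_one_eq_diagonal, ← diagonal_sub]
    rfl
  rw [hdiag, Matrix.mul_sub, Matrix.sub_mul, Matrix.mul_smul, Matrix.smul_mul, mul_one, hU]
  conv_lhs => rw [hB.spectral_theorem, Unitary.conjStarAlgAut_apply]

private lemma det_smul_one_sub_hermitian (z : ℂ) {B : Matrix m m ℂ} (hB : B.IsHermitian) :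
    det (z • (1 : Matrix m m ℂ) - B) = ∏ k, (z - (hB.eigenvalues k : ℂ)) := by
  have hdet : det (star (hB.eigenvectorUnitary : Matrix m m ℂ)) *
      det (hB.eigenvectorUnitary : Matrix m m ℂ) = 1 := by
    rw [← det_mul, Matrix.mem_unitaryGroup_iff'.mp hB.eigenvectorUnitary.2, det_one]
  rw [smul_one_sub_hermitian z hB, det_mul, det_mul, mul_comm, ← mul_assoc, hdet, one_mul,
    det_diagonal]

end Aux

/-- Eigenvector-eigenvalue identity: for an (n+1)×(n+1) Hermitian matrix `A`,
`|v_{i,j}|² ∏_{k≠i} (λ_i(A) - λ_k(A)) = ∏_k (λ_i(A) - λ_k(M_j))`,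
where `M_j` is the principal submatrix deleting row and column `j`. -/
theorem eigenvector_eigenvalue_identity (n : ℕ)
    (A : Matrix (Fin (n + 1)) (Fin (n + 1)) ℂ) (hA : A.IsHermitian)
    (i j : Fin (n + 1)) :
    ‖hA.eigenvectorBasis i j‖ ^ 2 *
        ∏ k ∈ Finset.univ.erase i, (hA.eigenvalues i - hA.eigenvalues k) =
      ∏ k : Fin n,
        (hA.eigenvalues i - (hA.submatrix j.succAbove).eigenvalues k) := by
  classical
  set z : ℂ := (hA.eigenvalues i : ℂ) with hz
  set P : Matrix (Fin (n + 1)) (Fin (n + 1)) ℂ := z • 1 - A with hP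
  -- Step 1: compute `adjugate P j j` via the spectral theorem
  have key1 : adjugate P j j =
      (hA.eigenvectorBasis i j * (starRingEnd ℂ) (hA.eigenvectorBasis i j)) *
        ∏ k ∈ Finset.univ.erase i, (z - (hA.eigenvalues k : ℂ)) := by
    rw [hP, smul_one_sub_hermitian z hA, adjugate_unitary_conj, adjugate_diagonal]
    rw [Matrix.mul_apply]
    have h1 : ∀ m, ((hA.eigenvectorUnitary : Matrix (Fin (n+1)) (Fin (n+1)) ℂ) *
        diagonal fun l => ∏ k ∈ Finset.univ.erase l, (z - (hA.eigenvalues k : ℂ))) j m *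
          star (hA.eigenvectorUnitary : Matrix (Fin (n+1)) (Fin (n+1)) ℂ) m j =
        ((hA.eigenvectorUnitary : Matrix (Fin (n+1)) (Fin (n+1)) ℂ) j m *
          (starRingEnd ℂ) ((hA.eigenvectorUnitary : Matrix (Fin (n+1)) (Fin (n+1)) ℂ) j m)) *
          ∏ k ∈ Finset.univ.erase m, (z - (hA.eigenvalues k : ℂ)) := by
      intro m
      rw [Matrix.mul_diagonal, Matrix.star_apply]
      ring_nf
      rfl
    simp only [h1]
    rw [Finset.sum_eq_single i]
    · simp [Matrix.IsHermitian.eigenvectorUnitary_apply]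
    · intro m _ hmi
      have hzero : ∏ k ∈ Finset.univ.erase m, (z - (hA.eigenvalues k : ℂ)) = 0 := by
        apply Finset.prod_eq_zero (Finset.mem_erase.mpr ⟨(Ne.symm hmi), Finset.mem_univ i⟩)
        rw [hz, sub_self]
      rw [hzero, mul_zero]
    · intro h; exact absurd (Finset.mem_univ i) h
  -- Step 2: compute `adjugate P j j` as a determinant of the submatrix
  have key2 : adjugate P j j =
      ∏ k : Fin n, (z - ((hA.submatrix j.succAbove).eigenvalues k : ℂ)) := by
    rw [adjugate_fin_succ_eq_det_submatrix]
    have hsign : ((-1 : ℂ)) ^ ((j : ℕ) + (j : ℕ)) = 1 :=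
      Even.neg_one_pow (Even.add_self _)
    have hsub : P.submatrix j.succAbove j.succAbove =
        z • (1 : Matrix (Fin n) (Fin n) ℂ) - A.submatrix j.succAbove j.succAbove := by
      ext a b
      simp only [hP, Matrix.submatrix_apply, Matrix.sub_apply, Matrix.smul_apply,
        Matrix.one_apply, (Fin.succAbove_right_injective (p := j)).eq_iff]
    rw [hsign, one_mul, hsub, det_smul_one_sub_hermitian z (hA.submatrix j.succAbove)]
  have keyC := key1.symm.trans key2
  -- Step 3: descend from ℂ to ℝ
  have habs : (hA.eigenvectorBasis i j * (starRingEnd ℂ) (hA.eigenvectorBasis i j)) =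
      ((‖hA.eigenvectorBasis i j‖ ^ 2 : ℝ) : ℂ) := by
    rw [Complex.mul_conj, Complex.sq_norm]
  rw [habs, hz] at keyC
  have keyR : ((‖hA.eigenvectorBasis i j‖ ^ 2 *
        ∏ k ∈ Finset.univ.erase i, (hA.eigenvalues i - hA.eigenvalues k) : ℝ) : ℂ) =
      ((∏ k : Fin n, (hA.eigenvalues i - (hA.submatrix j.succAbove).eigenvalues k) : ℝ) : ℂ) := by
    push_cast
    rw [← Complex.ofReal_pow]
    exact keyC
  exact Complex.ofReal_inj.mp keyR
end

section
/- Let A be an n×n Hermitian matrix with 0 as an eigenvalue, with orthonormal eigenvectors v_1,…,v_n ordered so that Av_n = 0, and eigenvalues λ_1,…,λ_{n−1}, λ_n = 0. Let M_n be the principal submatrix obtained by deleting the last row and column of A, and let v_{n,n} be the last component of v_n. Then det(M_n) = |v_{n,n}|² · ∏_{k=1}^{n−1} λ_k. -/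
open Matrix Polynomial

/-- If `A` is Hermitian with eigenvalues `λ_1,…,λ_n, 0` (with multiplicity),
and `v` is a unit eigenvector for the eigenvalue `0`, then the determinant of
the top-left principal submatrix `M_n` equals `|v_{n,n}|² ∏ λ_k`. -/
theorem det_submatrix_eq_sq_mul_prod (n : ℕ)
    (A : Matrix (Fin (n + 1)) (Fin (n + 1)) ℂ) (hA : A.IsHermitian)
    (l : Fin n → ℝ)
    (hchar : A.charpoly = X * ∏ k : Fin n, (X - C (l k : ℂ)))
    (v : Fin (n + 1) → ℂ)
    (hv : A *ᵥ v = 0)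
    (hnorm : ∑ i, ‖v i‖ ^ 2 = 1) :
    (A.submatrix Fin.castSucc Fin.castSucc).det =
      ((‖v (Fin.last n)‖ ^ 2 : ℝ) : ℂ) * ∏ k : Fin n, (l k : ℂ) := by
  classical
  set U : Matrix (Fin (n+1)) (Fin (n+1)) ℂ :=
    ((hA.eigenvectorUnitary : unitaryGroup (Fin (n+1)) ℂ) : Matrix (Fin (n+1)) (Fin (n+1)) ℂ)
    with hU_def
  set μ : Fin (n+1) → ℂ := fun i => ((hA.eigenvalues i : ℝ) : ℂ) with hmu_def
  set l' : Fin n → ℂ := fun k => ((l k : ℝ) : ℂ) with hl_def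
  have hUs : star U * U = 1 := Unitary.coe_star_mul_self _
  have hsU : U * star U = 1 := Unitary.coe_mul_star_self _
  have hAeq : A = U * diagonal μ * star U := hA.spectral_theorem
  set P : ℂ := ∏ k : Fin n, l' k with hP_def
  -- charpoly of A equals charpoly of the diagonal matrix
  have hcharD : A.charpoly = ∏ i, (X - C (μ i)) := by
    have hmm : ∀ (B B' : Matrix (Fin (n+1)) (Fin (n+1)) ℂ),
        (B * B').map (Polynomial.C : ℂ →+* ℂ[X]) = B.map C * B'.map C := fun B B' =>
      Matrix.map_mul
    have hsU' : U.map (Polynomial.C : ℂ →+* ℂ[X]) * (star U).map C = 1 := by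
      rw [← hmm, hsU]; simp
    have comm : ∀ (B : Matrix (Fin (n+1)) (Fin (n+1)) ℂ[X]),
        Matrix.scalar (Fin (n+1)) (X : ℂ[X]) * B = B * Matrix.scalar (Fin (n+1)) X :=
      fun B => (scalar_commute (X : ℂ[X]) (fun r' => Commute.all _ _) B).eq
    have key : charmatrix A = U.map C * charmatrix (diagonal μ) * (star U).map C := by
      rw [charmatrix, charmatrix, RingHom.mapMatrix_apply, RingHom.mapMatrix_apply, hAeq,
        hmm, hmm, mul_sub, sub_mul]
      congr 1
      rw [← comm, mul_assoc, hsU', mul_one]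
    have hdiag : charmatrix (diagonal μ) = diagonal (fun i => X - C (μ i)) := by
      ext i j
      by_cases h : i = j
      · subst h; simp [charmatrix_apply_eq]
      · simp [charmatrix_apply_ne _ _ _ h, diagonal_apply_ne _ h]
    rw [Matrix.charpoly, key, det_mul, det_mul, mul_right_comm, ← det_mul, hsU', det_one,
      one_mul, hdiag, det_diagonal]
  -- multiset of eigenvalues
  have hms : (Finset.univ.val.map μ) = 0 ::ₘ (Finset.univ.val.map l') := by
    have h : ∏ i, (X - C (μ i)) = X * ∏ k : Fin n, (X - C (l' k)) := hcharD ▸ hchar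
    have h1 : ((Finset.univ.val.map μ).map fun a => X - C a).prod
        = (((0 : ℂ) ::ₘ Finset.univ.val.map l').map fun a => X - C a).prod := by
      rw [Multiset.map_map, Multiset.map_cons, Multiset.prod_cons, Multiset.map_map,
        ← Finset.prod_eq_multiset_prod, ← Finset.prod_eq_multiset_prod]
      simpa using h
    have := congrArg Polynomial.roots h1
    rwa [roots_multiset_prod_X_sub_C, roots_multiset_prod_X_sub_C] at this
  -- adjugate diagonal entries
  have hw : ∀ i, (∏ j ∈ Finset.univ.erase i, μ j) = if μ i = 0 then P else 0 := by
    intro i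
    have hmem : i ∈ Finset.univ.val := Finset.mem_univ i
    have hsplit : (Finset.univ.val.map μ) = μ i ::ₘ ((Finset.univ.erase i).val.map μ) := by
      rw [Finset.erase_val, ← Multiset.map_cons, Multiset.cons_erase hmem]
    rw [Finset.prod_eq_multiset_prod]
    by_cases h : μ i = 0
    · rw [if_pos h]
      have heq : ((Finset.univ.erase i).val.map μ) = Finset.univ.val.map l' := by
        have h2 := hsplit.symm.trans hms
        rw [h] at h2
        exact (Multiset.cons_inj_right _).mp h2
      rw [heq, ← Finset.prod_eq_multiset_prod]
    · rw [if_neg h]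
      apply Multiset.prod_eq_zero
      have h0 : (0:ℂ) ∈ μ i ::ₘ ((Finset.univ.erase i).val.map μ) := by
        rw [← hsplit, hms]; exact Multiset.mem_cons_self _ _
      rcases Multiset.mem_cons.mp h0 with h'|h'
      · exact absurd h'.symm h
      · exact h'
  set w : Fin (n+1) → ℂ := fun i => if μ i = 0 then P else 0 with hw_def
  -- adjugate of A
  have hadjU : adjugate U = U.det • star U := by
    calc adjugate U = (star U * U) * adjugate U := by rw [hUs, one_mul]
    _ = star U * (U * adjugate U) := by rw [mul_assoc]
    _ = star U * (U.det • 1) := by rw [mul_adjugate]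
    _ = U.det • star U := by rw [mul_smul_one]
  have hadjsU : adjugate (star U) = (star U).det • U := by
    calc adjugate (star U) = (U * star U) * adjugate (star U) := by rw [hsU, one_mul]
    _ = U * (star U * adjugate (star U)) := by rw [mul_assoc]
    _ = U * ((star U).det • 1) := by rw [mul_adjugate]
    _ = (star U).det • U := by rw [mul_smul_one]
  have hadjA : adjugate A = U * diagonal w * star U := by
    have hdone : (star U).det * U.det = 1 := by rw [← det_mul, hUs, det_one]
    rw [hAeq, adjugate_mul_distrib, adjugate_mul_distrib, hadjU, hadjsU, adjugate_diagonal]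
    have hdd : (diagonal fun i => ∏ j ∈ Finset.univ.erase i, μ j) = diagonal w := by
      rw [show (fun i => ∏ j ∈ Finset.univ.erase i, μ j) = w from funext hw]
    rw [hdd]
    simp only [Matrix.smul_mul, Matrix.mul_smul, smul_smul]
    rw [mul_comm U.det, hdone, one_smul, ← mul_assoc]
  -- the submatrix determinant is a diagonal adjugate entry
  have hdetM : (A.submatrix Fin.castSucc Fin.castSucc).det
      = adjugate A (Fin.last n) (Fin.last n) := by
    rw [adjugate_fin_succ_eq_det_submatrix, Fin.succAbove_last]
    have he : (-1 : ℂ) ^ (((Fin.last n) : ℕ) + ((Fin.last n) : ℕ)) = 1 :=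
      Even.neg_one_pow ⟨n, by simp⟩
    rw [he, one_mul]
  have hentry : adjugate A (Fin.last n) (Fin.last n)
      = P * ∑ i, if μ i = 0 then U (Fin.last n) i * star (U (Fin.last n) i) else 0 := by
    rw [hadjA, Matrix.mul_apply, Finset.mul_sum]
    congr 1
    funext i
    rw [Matrix.mul_diagonal, Matrix.star_apply]
    by_cases h : μ i = 0
    · simp only [hw_def, if_pos h]; ring
    · simp only [hw_def, if_neg h, mul_zero, zero_mul]
  rw [hdetM, hentry]
  by_cases hP0 : P = 0
  · rw [hP0, zero_mul, mul_zero]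
  -- now P ≠ 0, get unique zero eigenvalue index
  have h0t : (0:ℂ) ∉ Finset.univ.val.map l' := by
    intro h
    rcases Multiset.mem_map.mp h with ⟨k, _, hk⟩
    exact hP0 (Finset.prod_eq_zero (Finset.mem_univ k) hk)
  have hcount : Multiset.count (0:ℂ) (Finset.univ.val.map μ) = 1 := by
    rw [hms, Multiset.count_cons_self, Multiset.count_eq_zero.mpr h0t]
  have hcard : (Finset.univ.filter (fun i => (0:ℂ) = μ i)).card = 1 := by
    rw [Multiset.count_map] at hcount
    simpa [Finset.card, Finset.filter] using hcount
  obtain ⟨i0, hi0⟩ := Finset.card_eq_one.mp hcard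
  have hμi0 : μ i0 = 0 := by
    have : i0 ∈ Finset.univ.filter (fun i => (0:ℂ) = μ i) := by rw [hi0]; exact Finset.mem_singleton_self i0
    exact ((Finset.mem_filter.mp this).2).symm
  have huniq : ∀ i, μ i = 0 → i = i0 := by
    intro i hi
    have : i ∈ Finset.univ.filter (fun j => (0:ℂ) = μ j) :=
      Finset.mem_filter.mpr ⟨Finset.mem_univ i, hi.symm⟩
    rw [hi0] at this
    exact Finset.mem_singleton.mp this
  -- kernel analysis
  set c : Fin (n+1) → ℂ := star U *ᵥ v with hc_def
  have hDc : diagonal μ *ᵥ c = 0 := by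
    have h1 : star U * A = diagonal μ * star U := by
      rw [hAeq, ← mul_assoc, ← mul_assoc, hUs, one_mul]
    have h2 : (diagonal μ * star U) *ᵥ v = 0 := by
      rw [← h1, ← mulVec_mulVec, hv, mulVec_zero]
    rw [hc_def, mulVec_mulVec, h2]
  have hci : ∀ i, i ≠ i0 → c i = 0 := by
    intro i hne
    have hμ : μ i ≠ 0 := fun h => hne (huniq i h)
    have := congrFun hDc i
    rw [mulVec_diagonal] at this
    exact (mul_eq_zero.mp this).resolve_left hμ
  have hvc : ∀ j, v j = U j i0 * c i0 := by
    intro j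
    have hv2 : v = U *ᵥ c := by rw [hc_def, mulVec_mulVec, hsU, one_mulVec]
    rw [hv2]
    show ∑ i, U j i * c i = U j i0 * c i0
    exact Finset.sum_eq_single i0 (fun i _ hne => by rw [hci i hne, mul_zero])
      (fun h => absurd (Finset.mem_univ i0) h)
  -- column norm of U
  have hcol : ∑ j, ‖U j i0‖ ^ 2 = 1 := by
    have h1 : (star U * U) i0 i0 = 1 := by rw [hUs]; simp
    rw [Matrix.mul_apply] at h1
    have h2 : ∀ j, (star U) i0 j * U j i0 = ((‖U j i0‖ ^ 2 : ℝ) : ℂ) := by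
      intro j
      rw [Matrix.star_apply, Complex.sq_norm, mul_comm]
      exact Complex.mul_conj _
    rw [Finset.sum_congr rfl (fun j _ => h2 j)] at h1
    exact_mod_cast h1
  have hc1 : ‖c i0‖ ^ 2 = 1 := by
    have h1 : ∀ j, ‖v j‖ ^ 2 = ‖U j i0‖ ^ 2 * ‖c i0‖ ^ 2 := by
      intro j; rw [hvc j, norm_mul, mul_pow]
    rw [Finset.sum_congr rfl (fun j _ => h1 j), ← Finset.sum_mul, hcol, one_mul] at hnorm
    exact hnorm
  have hvlast : ‖v (Fin.last n)‖ ^ 2 = ‖U (Fin.last n) i0‖ ^ 2 := by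
    rw [hvc (Fin.last n), norm_mul, mul_pow, hc1, mul_one]
  have hS : (∑ i, if μ i = 0 then U (Fin.last n) i * star (U (Fin.last n) i) else 0)
      = ((‖U (Fin.last n) i0‖ ^ 2 : ℝ) : ℂ) := by
    have h1 : ∀ i, (if μ i = 0 then U (Fin.last n) i * star (U (Fin.last n) i) else 0)
        = (if i = i0 then U (Fin.last n) i * star (U (Fin.last n) i) else 0) := by
      intro i
      by_cases h : μ i = 0
      · rw [if_pos h, if_pos (huniq i h)]
      · rw [if_neg h, if_neg (fun he => h (by rw [he]; exact hμi0))]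
    rw [Finset.sum_congr rfl (fun i _ => h1 i), Finset.sum_ite_eq' Finset.univ i0,
      if_pos (Finset.mem_univ i0), Complex.sq_norm]
    exact Complex.mul_conj _
  rw [hS, hvlast, mul_comm]
end

section
/- Let A be an n×n Hermitian matrix with eigenvalue 0, diagonalized as A = U Λ U* with U unitary and Λ = diag(λ_1,…,λ_{n−1},0), and let M_n be the top-left (n−1)×(n−1) submatrix of A. Then det(M_n) = (∏_{k=1}^{n−1} λ_k) · det(U_n U_n*), where U_n is the top-left (n−1)×(n−1) block of U. -/
open Matrix

/-- If a Hermitian matrix `A` is diagonalized as `U* A U = diag(λ_1,…,λ_{n-1},0)` with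
`U` unitary, then `det M_n = (∏ λ_k) · det (U_n U_n*)`, where `M_n` and `U_n` are the
top-left blocks of `A` and `U`. -/
theorem det_topLeft_block (n : ℕ)
    (A U : Matrix (Fin (n + 1)) (Fin (n + 1)) ℂ) (hA : A.IsHermitian)
    (hU : U ∈ Matrix.unitaryGroup (Fin (n + 1)) ℂ)
    (l : Fin n → ℝ)
    (hdiag : Uᴴ * A * U =
      Matrix.diagonal (Fin.snoc (fun k : Fin n => (l k : ℂ)) 0)) :
    (A.submatrix Fin.castSucc Fin.castSucc).det =
      (∏ k : Fin n, (l k : ℂ)) *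
        ((U.submatrix Fin.castSucc Fin.castSucc) *
          (U.submatrix Fin.castSucc Fin.castSucc)ᴴ).det := by
  have hU1 : U * Uᴴ = 1 := by
    have := hU.2
    rwa [Matrix.star_eq_conjTranspose] at this
  have hA' : A = U * Matrix.diagonal (Fin.snoc (fun k : Fin n => (l k : ℂ)) 0) * Uᴴ := by
    calc A = (U * Uᴴ) * A * (U * Uᴴ) := by rw [hU1]; simp
    _ = U * (Uᴴ * A * U) * Uᴴ := by noncomm_ring
    _ = U * Matrix.diagonal (Fin.snoc (fun k : Fin n => (l k : ℂ)) 0) * Uᴴ := by rw [hdiag]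
  set B := U.submatrix (Fin.castSucc (n := n)) Fin.castSucc with hB
  have key : A.submatrix Fin.castSucc Fin.castSucc =
      B * Matrix.diagonal (fun k : Fin n => (l k : ℂ)) * Bᴴ := by
    ext i j
    have hL : (A.submatrix (Fin.castSucc (n := n)) Fin.castSucc) i j =
        ∑ k : Fin (n + 1), U i.castSucc k *
          ((Fin.snoc (fun k : Fin n => (l k : ℂ)) 0 : Fin (n+1) → ℂ) k) * star (U j.castSucc k) := by
      rw [hA']
      simp only [Matrix.mul_assoc, Matrix.submatrix_apply, Matrix.mul_apply,
        Matrix.diagonal_apply, Matrix.conjTranspose_apply, ite_mul, zero_mul,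
        Finset.sum_ite_eq, Finset.mem_univ, if_true]
      exact Finset.sum_congr rfl fun k _ => by ring
    rw [hL, Fin.sum_univ_castSucc]
    simp only [Fin.snoc_castSucc, Fin.snoc_last, zero_mul, mul_zero, add_zero,
      Matrix.mul_apply, Matrix.diagonal_apply, Matrix.conjTranspose_apply,
      Matrix.submatrix_apply, mul_ite, ite_mul, zero_mul, mul_zero,
      Finset.sum_ite_eq, Finset.sum_ite_eq', Finset.mem_univ, if_true, hB]
  rw [key, Matrix.det_mul, Matrix.det_mul, Matrix.det_diagonal, Matrix.det_mul]
  ring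
end

section
/- Let A be an n×n Hermitian matrix with a zero eigenvalue and unit eigenvector v (Av = 0, ‖v‖ = 1), and let λ_1,…,λ_{n−1} be the remaining eigenvalues with multiplicity. Let M_1 be the submatrix of A obtained by deleting the first row and first column, with v_1 the first component of v. Then det(M_1) = |v_1|² · ∏_{k=1}^{n−1} λ_k. -/
open Matrix Polynomial

private lemma my_charpoly_unitary_conj {m : Type*} [Fintype m] [DecidableEq m]
    (U D : Matrix m m ℂ) (hU : U * star U = 1) (hU' : star U * U = 1) :
    (U * D * star U).charpoly = D.charpoly := by
  have hmap : ∀ (M N : Matrix m m ℂ), (M * N).map (C : ℂ →+* ℂ[X]) =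
      M.map C * N.map C := fun M N => Matrix.map_mul
  have key : charmatrix (U * D * star U) =
      U.map C * charmatrix D * (star U).map C := by
    unfold charmatrix
    simp only [RingHom.mapMatrix_apply]
    rw [Matrix.mul_sub, Matrix.sub_mul, hmap, hmap]
    congr 1
    · rw [← (scalar_commute (X : ℂ[X]) (Commute.all _) (U.map C)).eq, Matrix.mul_assoc,
        ← hmap, hU]
      simp
  have hdet : ((star U).map (C : ℂ →+* ℂ[X])).det * (U.map (C : ℂ →+* ℂ[X])).det = 1 := by
    rw [← Matrix.det_mul, ← hmap, hU']
    simp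
  rw [Matrix.charpoly, Matrix.charpoly, key, Matrix.det_mul, Matrix.det_mul]
  calc (U.map C).det * (charmatrix D).det * ((star U).map C).det
      = ((star U).map C).det * (U.map C).det * (charmatrix D).det := by ring
    _ = (charmatrix D).det := by rw [hdet, one_mul]

private lemma my_adjugate_unitary {m : Type*} [Fintype m] [DecidableEq m]
    (U : Matrix m m ℂ) (hU : U * star U = 1) :
    adjugate U = U.det • star U := by
  calc adjugate U = adjugate U * (U * star U) := by rw [hU, mul_one]
    _ = (adjugate U * U) * star U := by rw [mul_assoc]
    _ = U.det • star U := by rw [Matrix.adjugate_mul, smul_mul_assoc, one_mul]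

private lemma my_adjugate_conj {m : Type*} [Fintype m] [DecidableEq m]
    (U D : Matrix m m ℂ) (hU : U * star U = 1) (hU' : star U * U = 1) :
    adjugate (U * D * star U) = U * adjugate D * star U := by
  have h1 : adjugate U = U.det • star U := my_adjugate_unitary U hU
  have h2 : adjugate (star U) = (star U).det • U := by
    have := my_adjugate_unitary (star U) (by rw [star_star, hU'])
    rwa [star_star] at this
  have hd : (star U).det * U.det = 1 := by rw [← Matrix.det_mul, hU']; simp
  rw [Matrix.adjugate_mul_distrib, Matrix.adjugate_mul_distrib, h1, h2]
  rw [Matrix.smul_mul, Matrix.mul_smul, Matrix.mul_smul, smul_smul, hd, one_smul,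
    Matrix.mul_assoc]

/-- If `A` is Hermitian with eigenvalues `0, λ_1,…,λ_{n-1}` (with multiplicity) and `v`
is a unit eigenvector for `0`, then `det M₁ = |v_1|² ∏ λ_k`, where `M₁` is the
bottom-right principal submatrix deleting the first row and column. -/
theorem det_submatrix_one (n : ℕ)
    (A : Matrix (Fin (n + 1)) (Fin (n + 1)) ℂ) (hA : A.IsHermitian)
    (l : Fin n → ℝ)
    (hchar : A.charpoly = X * ∏ k : Fin n, (X - C (l k : ℂ)))
    (v : Fin (n + 1) → ℂ)
    (hv : A *ᵥ v = 0)
    (hnorm : ∑ i, ‖v i‖ ^ 2 = 1) :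
    (A.submatrix Fin.succ Fin.succ).det =
      ((‖v 0‖ ^ 2 : ℝ) : ℂ) * ∏ k : Fin n, (l k : ℂ) := by
  classical
  set μ : Fin (n + 1) → ℝ := hA.eigenvalues with hμ
  set U : Matrix (Fin (n + 1)) (Fin (n + 1)) ℂ := (hA.eigenvectorUnitary : Matrix (Fin (n+1)) (Fin (n+1)) ℂ)
    with hUdef
  have hU : U * star U = 1 := (Matrix.mem_unitaryGroup_iff).mp hA.eigenvectorUnitary.2
  have hU' : star U * U = 1 := (Matrix.mem_unitaryGroup_iff').mp hA.eigenvectorUnitary.2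
  set D : Matrix (Fin (n + 1)) (Fin (n + 1)) ℂ := diagonal (fun i => (μ i : ℂ)) with hDdef
  have hspec : A = U * D * star U := hA.spectral_theorem
  -- characteristic polynomial in terms of eigenvalues
  have hcharD : A.charpoly = ∏ i : Fin (n + 1), (X - C ((μ i : ℂ))) := by
    rw [hspec, my_charpoly_unitary_conj U D hU hU', hDdef,
      Matrix.charpoly_of_upperTriangular _ (Matrix.blockTriangular_diagonal _)]
    simp
  have heq : (X : ℂ[X]) * ∏ k : Fin n, (X - C (l k : ℂ))
      = ∏ i : Fin (n + 1), (X - C (μ i : ℂ)) := by rw [← hchar, hcharD]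
  -- multiset equality of eigenvalues
  have hmult : (0 : ℂ) ::ₘ Finset.univ.val.map (fun k => (l k : ℂ))
      = Finset.univ.val.map (fun i => (μ i : ℂ)) := by
    have h1 : (X : ℂ[X]) * ∏ k : Fin n, (X - C (l k : ℂ))
        = (((0 : ℂ) ::ₘ Finset.univ.val.map (fun k => (l k : ℂ))).map fun a => X - C a).prod := by
      rw [Multiset.map_cons, Multiset.prod_cons, Multiset.map_map, C_0, sub_zero]
      rfl
    have h2 : (∏ i : Fin (n + 1), (X - C (μ i : ℂ)))
        = ((Finset.univ.val.map (fun i => (μ i : ℂ))).map fun a => X - C a).prod := by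
      rw [Multiset.map_map]; rfl
    have := congrArg Polynomial.roots heq
    rwa [h1, h2, Polynomial.roots_multiset_prod_X_sub_C,
      Polynomial.roots_multiset_prod_X_sub_C] at this
  -- the determinant of the submatrix is the (0,0) entry of the adjugate
  have hadj00 : (A.submatrix Fin.succ Fin.succ).det = adjugate A 0 0 := by
    rw [Matrix.adjugate_fin_succ_eq_det_submatrix]
    simp [Fin.succAbove_zero]
  have hadjA : adjugate A = U * adjugate D * star U := by
    rw [hspec, my_adjugate_conj U D hU hU']
  have hadjD : adjugate D = diagonal (fun i => ∏ j ∈ Finset.univ.erase i, (μ j : ℂ)) := by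
    rw [hDdef, Matrix.adjugate_diagonal]
  set d : Fin (n + 1) → ℂ := fun i => ∏ j ∈ Finset.univ.erase i, (μ j : ℂ) with hd
  have hsum : adjugate A 0 0 = ∑ j, U 0 j * d j * star (U 0 j) := by
    rw [hadjA, hadjD, Matrix.mul_apply]
    refine Finset.sum_congr rfl fun j _ => ?_
    rw [Matrix.mul_diagonal, Matrix.star_apply]
  by_cases hex : ∃ k, l k = 0
  · -- zero is a repeated eigenvalue: both sides vanish
    obtain ⟨k0, hk0⟩ := hex
    have hrhs : ∏ k : Fin n, (l k : ℂ) = 0 :=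
      Finset.prod_eq_zero (Finset.mem_univ k0) (by rw [hk0]; simp)
    rw [hrhs, mul_zero, hadj00, hsum]
    set F := Finset.univ.filter (fun i => (0 : ℂ) = (μ i : ℂ)) with hF
    have hcard : 2 ≤ F.card := by
      have hmem : (0 : ℂ) ∈ Finset.univ.val.map (fun k => (l k : ℂ)) :=
        Multiset.mem_map.mpr ⟨k0, Finset.mem_univ k0, by rw [hk0]; simp⟩
      have hc : 2 ≤ Multiset.count (0 : ℂ) (Finset.univ.val.map (fun i => (μ i : ℂ))) := by
        rw [← hmult, Multiset.count_cons_self]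
        have := Multiset.one_le_count_iff_mem.mpr hmem
        omega
      rwa [Multiset.count_map, ← Finset.filter_val, ← Finset.card_def] at hc
    obtain ⟨a, ha, b, hb, hab⟩ := Finset.one_lt_card.mp hcard
    have hμa : (μ a : ℂ) = 0 := ((Finset.mem_filter.mp ha).2).symm
    have hμb : (μ b : ℂ) = 0 := ((Finset.mem_filter.mp hb).2).symm
    have hdzero : ∀ i, d i = 0 := by
      intro i
      rcases eq_or_ne i a with rfl | hia
      · exact Finset.prod_eq_zero
          (Finset.mem_erase.mpr ⟨fun h => hab h.symm, Finset.mem_univ b⟩) hμb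
      · exact Finset.prod_eq_zero
          (Finset.mem_erase.mpr ⟨fun h => hia h.symm, Finset.mem_univ a⟩) hμa
    exact Finset.sum_eq_zero fun j _ => by rw [hdzero j, mul_zero, zero_mul]
  · -- zero is a simple eigenvalue
    push_neg at hex
    have hs0 : (0 : ℂ) ∉ Finset.univ.val.map (fun k => (l k : ℂ)) := by
      intro hmem
      obtain ⟨k, -, hk⟩ := Multiset.mem_map.mp hmem
      exact hex k (by exact_mod_cast hk)
    have hc1 : Multiset.count (0 : ℂ) (Finset.univ.val.map (fun i => (μ i : ℂ))) = 1 := by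
      rw [← hmult, Multiset.count_cons_self, Multiset.count_eq_zero.mpr hs0]
    set F := Finset.univ.filter (fun i => (0 : ℂ) = (μ i : ℂ)) with hF
    have hcard : F.card = 1 := by
      rw [Multiset.count_map, ← Finset.filter_val, ← Finset.card_def] at hc1
      exact hc1
    obtain ⟨i0, hFi0⟩ := Finset.card_eq_one.mp hcard
    have hi0 : (μ i0 : ℂ) = 0 := by
      have : i0 ∈ F := hFi0 ▸ Finset.mem_singleton_self i0
      exact ((Finset.mem_filter.mp this).2).symm
    have huniq : ∀ i, (μ i : ℂ) = 0 → i = i0 := by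
      intro i hi
      have : i ∈ F := Finset.mem_filter.mpr ⟨Finset.mem_univ i, hi.symm⟩
      rw [hFi0] at this
      exact Finset.mem_singleton.mp this
    -- the product of the nonzero eigenvalues
    have hsplit : (Finset.univ : Finset (Fin (n + 1))).val
        = i0 ::ₘ (Finset.univ.erase i0).val := by
      rw [Finset.erase_val]
      exact (Multiset.cons_erase (Finset.mem_val.mpr (Finset.mem_univ i0))).symm
    have hserase : Finset.univ.val.map (fun k => (l k : ℂ))
        = ((Finset.univ.erase i0).val).map (fun i => (μ i : ℂ)) := by
      have h := hmult
      rw [hsplit, Multiset.map_cons, hi0] at h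
      exact (Multiset.cons_inj_right _).mp h
    have hprod : ∏ k : Fin n, (l k : ℂ) = d i0 := by
      have := congrArg Multiset.prod hserase
      rwa [← Finset.prod_eq_multiset_prod, ← Finset.prod_eq_multiset_prod] at this
    have hdzero : ∀ j, j ≠ i0 → d j = 0 := fun j hj =>
      Finset.prod_eq_zero
        (Finset.mem_erase.mpr ⟨fun h => hj h.symm, Finset.mem_univ i0⟩) hi0
    have hsum1 : adjugate A 0 0 = U 0 i0 * d i0 * star (U 0 i0) := by
      rw [hsum]
      exact Finset.sum_eq_single i0
        (fun j _ hj => by rw [hdzero j hj, mul_zero, zero_mul])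
        (fun h => absurd (Finset.mem_univ i0) h)
    -- the eigenvector for 0
    set w : Fin (n + 1) → ℂ := star U *ᵥ v with hw
    have hDw : D *ᵥ w = 0 := by
      have h2 : star U * A = D * star U := by
        rw [hspec, ← Matrix.mul_assoc, ← Matrix.mul_assoc, hU', Matrix.one_mul]
      calc D *ᵥ w = (D * star U) *ᵥ v := by rw [hw, Matrix.mulVec_mulVec]
        _ = (star U * A) *ᵥ v := by rw [h2]
        _ = star U *ᵥ (A *ᵥ v) := by rw [Matrix.mulVec_mulVec]
        _ = 0 := by rw [hv, Matrix.mulVec_zero]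
    have hwzero : ∀ i, i ≠ i0 → w i = 0 := by
      intro i hi
      have h1 : (μ i : ℂ) * w i = 0 := by
        have := congrFun hDw i
        rwa [Matrix.mulVec_diagonal] at this
      rcases mul_eq_zero.mp h1 with h | h
      · exact absurd (huniq i h) hi
      · exact h
    have hvj : ∀ j, v j = U j i0 * w i0 := by
      intro j
      have hvw : v j = (U *ᵥ w) j := by
        rw [hw, Matrix.mulVec_mulVec, hU, Matrix.one_mulVec]
      rw [hvw, Matrix.mulVec]
      exact Finset.sum_eq_single i0
        (fun i _ hi => by rw [hwzero i hi, mul_zero])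
        (fun h => absurd (Finset.mem_univ i0) h)
    have hcol : ∑ i, (‖U i i0‖ ^ 2 : ℝ) = 1 := by
      have h1 : (star U * U) i0 i0 = 1 := by rw [hU']; simp
      rw [Matrix.mul_apply] at h1
      have h2 : ∑ i, ((‖U i i0‖ ^ 2 : ℝ) : ℂ) = 1 := by
        rw [← h1]
        refine Finset.sum_congr rfl fun i _ => ?_
        rw [Matrix.star_apply, Complex.sq_norm, Complex.normSq_eq_conj_mul_self]
        rfl
      have := h2
      rw [← Complex.ofReal_sum] at this
      exact_mod_cast this
    have habsw : ‖w i0‖ ^ 2 = 1 := by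
      have h1 : ∑ i, ‖v i‖ ^ 2
          = (∑ i, ‖U i i0‖ ^ 2) * ‖w i0‖ ^ 2 := by
        rw [Finset.sum_mul]
        refine Finset.sum_congr rfl fun i _ => ?_
        rw [hvj i, norm_mul, mul_pow]
      rw [hnorm, hcol, one_mul] at h1
      exact h1.symm
    have hv0 : ((‖v 0‖ ^ 2 : ℝ) : ℂ) = U 0 i0 * star (U 0 i0) := by
      have h1 : ‖v 0‖ ^ 2 = ‖U 0 i0‖ ^ 2 := by
        rw [hvj 0, norm_mul, mul_pow, habsw, mul_one]
      rw [h1]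
      rw [show star (U 0 i0) = (starRingEnd ℂ) (U 0 i0) from rfl, Complex.mul_conj,
        Complex.sq_norm]
    rw [hadj00, hsum1, ← hprod, hv0]
    ring
end
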